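/- Let q be a real number with 0 < q < 1, let k ≥ 1 and n ≥ 1 be natural numbers, and let θ_1, …, θ_k be positive real numbers. Then the negative q-multinomial distribution of the first kind with parameters n, (θ_1,…,θ_k), q is a probability distribution: the family indexed by tuples (t_1,…,t_k) ∈ ℕ^k of terms C_q(n + s_k − 1; t_1,…,t_k) · ∏_{j=1}^{k} [ θ_j^{t_j} · q^{t_j(t_j−1)/2} / ∏_{i=1}^{n + s_k − s_{j−1}} (1 + θ_j q^{i−1}) ] is summable with sum equal to 1; here s_j = t_1 + ⋯ + t_j with s_0 = 0 and s_k = t_1 + ⋯ + t_k. -/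

import Mathlib

open Filter Finset

noncomputable def qNum (q : ℝ) (m : ℤ) : ℝ := (1 - q ^ m) / (1 - q)

noncomputable def qFactorial (q : ℝ) (n : ℕ) : ℝ :=
  ∏ i ∈ Finset.range n, qNum q ((i : ℤ) + 1)

noncomputable def qFacOrd (q : ℝ) (x : ℤ) (r : ℕ) : ℝ :=
  ∏ i ∈ Finset.range r, qNum q (x - (i : ℤ))

noncomputable def qMultinomial (q : ℝ) (x : ℤ) {k : ℕ} (r : Fin k → ℕ) : ℝ :=
  qFacOrd q x (∑ j, r j) / ∏ j, qFactorial q (r j)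

noncomputable def qb (q : ℝ) (x : ℤ) (s : ℕ) : ℝ := qFacOrd q x s / qFactorial q s

variable {q : ℝ} (hq0 : 0 < q) (hq1 : q < 1)

section basic
include hq0 hq1

lemma qNum_pos {m : ℤ} (hm : 0 < m) : 0 < qNum q m := by
  have h1 : q ^ m < 1 := by
    lift m to ℕ using hm.le
    rw [zpow_natCast]
    exact pow_lt_one₀ hq0.le hq1 (by exact_mod_cast hm.ne')
  have : (0:ℝ) < 1 - q := by linarith
  exact div_pos (by linarith) this

lemma qNum_nonneg {m : ℤ} (hm : 0 ≤ m) : 0 ≤ qNum q m := by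
  have h1 : q ^ m ≤ 1 := by
    lift m to ℕ using hm
    rw [zpow_natCast]
    exact pow_le_one₀ hq0.le hq1.le
  have : (0:ℝ) < 1 - q := by linarith
  exact div_nonneg (by linarith) this.le

lemma qNum_le {m : ℤ} (hm : 0 ≤ m) : qNum q m ≤ 1 / (1 - q) := by
  have h1 : 0 ≤ q ^ m := zpow_nonneg hq0.le m
  have h2 : (0:ℝ) < 1 - q := by linarith
  rw [qNum, div_le_div_iff₀ h2 h2]
  nlinarith

lemma one_le_qNum {m : ℤ} (hm : 1 ≤ m) : 1 ≤ qNum q m := by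
  have h1 : q ^ m ≤ q := by
    calc q ^ m ≤ q ^ (1:ℤ) := zpow_le_zpow_right_of_le_one₀ hq0 hq1.le hm
      _ = q := zpow_one q
  have h2 : (0:ℝ) < 1 - q := by linarith
  rw [qNum, le_div_iff₀ h2]; linarith

lemma qFactorial_pos (n : ℕ) : 0 < qFactorial q n :=
  Finset.prod_pos fun i _ => qNum_pos hq0 hq1 (by positivity)

lemma one_le_qFactorial (n : ℕ) : 1 ≤ qFactorial q n := by
  rw [qFactorial]
  calc (1:ℝ) = ∏ _i ∈ Finset.range n, 1 := by simp
    _ ≤ _ := Finset.prod_le_prod (by simp)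
        (fun i _ => one_le_qNum hq0 hq1 (by omega))

lemma qFacOrd_nat_nonneg (N s : ℕ) : 0 ≤ qFacOrd q (N:ℤ) s := by
  rcases le_or_gt s N with h | h
  · exact Finset.prod_nonneg fun i hi => qNum_nonneg hq0 hq1
      (by simp only [Finset.mem_range] at hi; omega)
  · rw [qFacOrd]
    rw [Finset.prod_eq_zero (Finset.mem_range.2 h) (by simp [qNum])]

lemma qb_nonneg (N s : ℕ) : 0 ≤ qb q (N:ℤ) s :=
  div_nonneg (qFacOrd_nat_nonneg hq0 hq1 N s) (qFactorial_pos hq0 hq1 s).le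

lemma qb_zero_of_lt {N s : ℕ} (h : N < s) : qb q (N:ℤ) s = 0 := by
  rw [qb, qFacOrd, Finset.prod_eq_zero (Finset.mem_range.2 h) (by simp [qNum]), zero_div]

lemma qFacOrd_le (N s : ℕ) (hs : s ≤ N) : qFacOrd q (N:ℤ) s ≤ (1/(1-q))^s := by
  rw [qFacOrd]
  calc ∏ i ∈ Finset.range s, qNum q ((N:ℤ) - i)
      ≤ ∏ _i ∈ Finset.range s, (1/(1-q)) := by
        apply Finset.prod_le_prod
        · exact fun i hi => qNum_nonneg hq0 hq1
            (by simp only [Finset.mem_range] at hi; omega)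
        · exact fun i hi => qNum_le hq0 hq1
            (by simp only [Finset.mem_range] at hi; omega)
    _ = (1/(1-q))^s := by rw [Finset.prod_const, Finset.card_range]

lemma qb_le (N s : ℕ) (hs : s ≤ N) : qb q (N:ℤ) s ≤ (1/(1-q))^s :=
  (div_le_self (qFacOrd_nat_nonneg hq0 hq1 N s) (one_le_qFactorial hq0 hq1 s)).trans
    (qFacOrd_le hq0 hq1 N s hs)

end basic

section pascal
include hq0 hq1

lemma qb_pascal {N s : ℕ} (hs : s ≤ N) :
    qb q ((N:ℤ)+1) (s+1) = qb q (N:ℤ) (s+1) + q^(N-s) * qb q (N:ℤ) s := by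
  have h1q : (0:ℝ) < 1 - q := by linarith
  have e1 : qFacOrd q ((N:ℤ)+1) (s+1) = qNum q ((N:ℤ)+1) * qFacOrd q (N:ℤ) s := by
    rw [qFacOrd, Finset.prod_range_succ']
    simp only [Nat.cast_zero, sub_zero]
    rw [mul_comm, qFacOrd]
    congr 1
    exact Finset.prod_congr rfl fun i _ => by push_cast; ring_nf
  have e2 : qFacOrd q (N:ℤ) (s+1) = qFacOrd q (N:ℤ) s * qNum q ((N:ℤ) - s) :=
    Finset.prod_range_succ _ _
  have e3 : qFactorial q (s+1) = qFactorial q s * qNum q ((s:ℤ)+1) :=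
    Finset.prod_range_succ _ _
  have scalar : qNum q ((N:ℤ)+1) = qNum q ((N:ℤ)-(s:ℤ)) + q^(N-s) * qNum q ((s:ℤ)+1) := by
    have c1 : ((N:ℤ)+1) = ((N+1 : ℕ):ℤ) := by push_cast; ring
    have c2 : ((N:ℤ)-(s:ℤ)) = ((N-s : ℕ):ℤ) := by omega
    have c3 : ((s:ℤ)+1) = ((s+1 : ℕ):ℤ) := by push_cast; ring
    rw [qNum, qNum, qNum, c1, c2, c3, zpow_natCast, zpow_natCast, zpow_natCast]
    rw [← mul_div_assoc, ← add_div]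
    congr 1
    have : q^(N-s) * q^(s+1) = q^(N+1) := by rw [← pow_add]; congr 1; omega
    linear_combination this
  have hQ : qFactorial q s ≠ 0 := (qFactorial_pos hq0 hq1 s).ne'
  have hqs : qNum q ((s:ℤ)+1) ≠ 0 := (qNum_pos hq0 hq1 (by positivity)).ne'
  rw [qb, qb, qb, e1, e2, e3, scalar]
  field_simp

end pascal

noncomputable def Tq (q θ : ℝ) (N s : ℕ) : ℝ := qb q (N:ℤ) s * (θ^s * q^(s*(s-1)/2))

noncomputable def aterm (q θ : ℝ) (n t : ℕ) : ℝ :=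
  qb q ((n:ℤ)+t-1) t * (θ^t * q^(t*(t-1)/2)) / ∏ i ∈ Finset.range (n+t), (1+θ*q^i)

lemma tri (s : ℕ) : (s+1)*s/2 = s*(s-1)/2 + s := by
  have h1 : (s+1)*s/2 = ∑ i ∈ Finset.range (s+1), i := (Finset.sum_range_id (s+1)).symm
  have h2 : s*(s-1)/2 = ∑ i ∈ Finset.range s, i := (Finset.sum_range_id s).symm
  rw [h1, h2, Finset.sum_range_succ]

lemma qb_zero (x : ℤ) : qb q x 0 = 1 := by simp [qb, qFacOrd, qFactorial]

lemma Tq_zero (θ : ℝ) (N : ℕ) : Tq q θ N 0 = 1 := by simp [Tq, qb_zero]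

section key
include hq0 hq1

lemma Tq_step (θ : ℝ) {N s : ℕ} (hs : s ≤ N) :
    Tq q θ (N+1) (s+1) = Tq q θ N (s+1) + (θ*q^N) * Tq q θ N s := by
  have e : ((N:ℤ)+1) = ((N+1:ℕ):ℤ) := by push_cast; ring
  have hp := qb_pascal hq0 hq1 hs
  rw [e] at hp
  rw [Tq, Tq, Tq, hp]
  have epow : q^(N-s) * q^((s+1)*s/2) = q^N * q^(s*(s-1)/2) := by
    rw [← pow_add, ← pow_add]
    congr 1
    rw [tri]; omega
  have : (s+1)*((s+1)-1)/2 = (s+1)*s/2 := by simp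
  rw [this]
  linear_combination (qb q (N:ℤ) s * θ^(s+1)) * epow

lemma key (θ : ℝ) {N m : ℕ} (hm : m ≤ N) :
    ∑ s ∈ Finset.range (m+2), Tq q θ (N+1) s
    = (1+θ*q^N) * ∑ s ∈ Finset.range (m+1), Tq q θ N s + Tq q θ N (m+1) := by
  rw [Finset.sum_range_succ' (fun s => Tq q θ (N+1) s) (m+1)]
  have l1 : ∑ s ∈ Finset.range (m+1), Tq q θ (N+1) (s+1)
      = ∑ s ∈ Finset.range (m+1), (Tq q θ N (s+1) + (θ*q^N) * Tq q θ N s) :=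
    Finset.sum_congr rfl fun s hs =>
      Tq_step hq0 hq1 θ (by simp only [Finset.mem_range] at hs; omega)
  rw [l1, Finset.sum_add_distrib, ← Finset.mul_sum]
  have l4 : ∑ s ∈ Finset.range (m+2), Tq q θ N s
      = ∑ s ∈ Finset.range (m+1), Tq q θ N (s+1) + 1 := by
    rw [Finset.sum_range_succ' (fun s => Tq q θ N s) (m+1), Tq_zero]
  have l5 : ∑ s ∈ Finset.range (m+2), Tq q θ N s
      = ∑ s ∈ Finset.range (m+1), Tq q θ N s + Tq q θ N (m+1) :=
    Finset.sum_range_succ _ _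
  have := l4.symm.trans l5
  rw [Tq_zero]
  linarith

lemma rothe (θ : ℝ) : ∀ N, ∑ s ∈ Finset.range (N+1), Tq q θ N s
    = ∏ i ∈ Finset.range N, (1+θ*q^i) := by
  intro N
  induction N with
  | zero => simp [Tq_zero]
  | succ N ih =>
      have : N + 1 + 1 = N + 2 := rfl
      rw [this, key hq0 hq1 θ (le_refl N), ih]
      have hz : Tq q θ N (N+1) = 0 := by
        rw [Tq, qb_zero_of_lt hq0 hq1 (by omega), zero_mul]
      rw [hz, Finset.prod_range_succ]
      ring

lemma partial_sum (n : ℕ) (hn : 1 ≤ n) (θ : ℝ) (hθ : 0 < θ) : ∀ M,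
    ∑ t ∈ Finset.range (M+1), aterm q θ n t
    = (∑ s ∈ Finset.range (M+1), Tq q θ (n+M) s) / ∏ i ∈ Finset.range (n+M), (1+θ*q^i) := by
  have hD : ∀ m : ℕ, (0:ℝ) < ∏ i ∈ Finset.range m, (1+θ*q^i) :=
    fun m => Finset.prod_pos fun i _ => by positivity
  intro M
  induction M with
  | zero =>
      simp [aterm, Tq_zero, qb_zero]
  | succ M ih =>
      rw [Finset.sum_range_succ, ih]
      have hc : ((n:ℤ) + ((M+1:ℕ):ℤ) - 1) = ((n+M:ℕ):ℤ) := by push_cast; ring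
      have ha : aterm q θ n (M+1)
          = Tq q θ (n+M) (M+1) / ((∏ i ∈ Finset.range (n+M), (1+θ*q^i)) * (1+θ*q^(n+M))) := by
        rw [aterm, Tq, hc]
        have h1 : n + (M+1) = (n+M) + 1 := by omega
        rw [h1, Finset.prod_range_succ]
      rw [ha]
      have hk := key hq0 hq1 θ (by omega : M ≤ n+M)
      have h3 : n + (M+1) = (n+M) + 1 := by omega
      rw [h3, Finset.prod_range_succ, hk]
      have hD1 := hD (n+M)
      have hc1 : (0:ℝ) < 1+θ*q^(n+M) := by positivity
      field_simp

end key

section negqbin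
include hq0 hq1

lemma Tq_nonneg {θ : ℝ} (hθ : 0 < θ) (N s : ℕ) : 0 ≤ Tq q θ N s := by
  rw [Tq]
  have := qb_nonneg hq0 hq1 N s
  positivity

lemma aterm_nonneg {θ : ℝ} (hθ : 0 < θ) {n : ℕ} (hn : 1 ≤ n) (t : ℕ) :
    0 ≤ aterm q θ n t := by
  have hc : ((n:ℤ)+t-1) = ((n+t-1:ℕ):ℤ) := by omega
  rw [aterm, hc]
  have h1 := qb_nonneg hq0 hq1 (n+t-1) t
  have h2 : (0:ℝ) < ∏ i ∈ Finset.range (n+t), (1+θ*q^i) :=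
    Finset.prod_pos fun i _ => by positivity
  positivity

lemma negqbin {n : ℕ} (hn : 1 ≤ n) {θ : ℝ} (hθ : 0 < θ) :
    HasSum (fun t => aterm q θ n t) 1 := by
  rw [hasSum_iff_tendsto_nat_of_nonneg (aterm_nonneg hq0 hq1 hθ hn) 1]
  rw [← Filter.tendsto_add_atTop_iff_nat 1]
  set C : ℝ := max 1 (θ/(1-q)) with hC
  have h1q : (0:ℝ) < 1 - q := by linarith
  have hC1 : (1:ℝ) ≤ C := le_max_left _ _
  have hC0 : (0:ℝ) < C := by linarith
  set b : ℕ → ℝ := fun M => (n:ℝ) * C^(n+M) * q^((M+1)*M/2) with hb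
  have hbnn : ∀ M, 0 ≤ b M := fun M => by positivity
  have hdiff : ∀ M, 0 ≤ 1 - ∑ t ∈ Finset.range (M+1), aterm q θ n t ∧
      1 - ∑ t ∈ Finset.range (M+1), aterm q θ n t ≤ b M := by
    intro M
    have hD : (0:ℝ) < ∏ i ∈ Finset.range (n+M), (1+θ*q^i) :=
      Finset.prod_pos fun i _ => by positivity
    have hD1 : (1:ℝ) ≤ ∏ i ∈ Finset.range (n+M), (1+θ*q^i) := by
      calc (1:ℝ) = ∏ _i ∈ Finset.range (n+M), (1:ℝ) := by simp
        _ ≤ _ := Finset.prod_le_prod (fun i _ => by norm_num)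
            (fun i _ => by nlinarith [pow_pos hq0 i])
    rw [partial_sum hq0 hq1 n hn θ hθ M]
    have hsub : (∏ i ∈ Finset.range (n+M), (1+θ*q^i))
        - ∑ s ∈ Finset.range (M+1), Tq q θ (n+M) s
        = ∑ s ∈ Finset.Ico (M+1) (n+M+1), Tq q θ (n+M) s := by
      rw [← rothe hq0 hq1 θ (n+M), Finset.sum_Ico_eq_sub _ (by omega)]
    have key1 : 1 - (∑ s ∈ Finset.range (M+1), Tq q θ (n+M) s) / ∏ i ∈ Finset.range (n+M), (1+θ*q^i)
        = (∑ s ∈ Finset.Ico (M+1) (n+M+1), Tq q θ (n+M) s) / ∏ i ∈ Finset.range (n+M), (1+θ*q^i) := by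
      rw [← hsub, sub_div, div_self hD.ne']
    rw [key1]
    have hIconn : 0 ≤ ∑ s ∈ Finset.Ico (M+1) (n+M+1), Tq q θ (n+M) s :=
      Finset.sum_nonneg fun s _ => Tq_nonneg hq0 hq1 hθ _ _
    constructor
    · positivity
    · have hbound : ∑ s ∈ Finset.Ico (M+1) (n+M+1), Tq q θ (n+M) s
          ≤ (n:ℝ) * (C^(n+M) * q^((M+1)*M/2)) := by
        have hterm : ∀ s ∈ Finset.Ico (M+1) (n+M+1),
            Tq q θ (n+M) s ≤ C^(n+M) * q^((M+1)*M/2) := by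
          intro s hs
          simp only [Finset.mem_Ico] at hs
          have hs1 : M+1 ≤ s := hs.1
          have hs2 : s ≤ n+M := by omega
          have e1 : Tq q θ (n+M) s ≤ (1/(1-q))^s * (θ^s * q^(s*(s-1)/2)) := by
            rw [Tq]
            apply mul_le_mul_of_nonneg_right (qb_le hq0 hq1 _ _ hs2)
            positivity
          have e2 : (1/(1-q))^s * (θ^s * q^(s*(s-1)/2)) = (θ/(1-q))^s * q^(s*(s-1)/2) := by
            rw [div_pow, div_pow, one_pow]
            ring
          have e3 : (θ/(1-q))^s ≤ C^s :=
            pow_le_pow_left₀ (by positivity) (le_max_right _ _) s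
          have e4 : C^s ≤ C^(n+M) := pow_le_pow_right₀ hC1 hs2
          have e5 : q^(s*(s-1)/2) ≤ q^((M+1)*M/2) := by
            apply pow_le_pow_of_le_one hq0.le hq1.le
            apply Nat.div_le_div_right
            exact Nat.mul_le_mul hs1 (by omega)
          calc Tq q θ (n+M) s ≤ (θ/(1-q))^s * q^(s*(s-1)/2) := by rw [← e2]; exact e1
            _ ≤ C^(n+M) * q^((M+1)*M/2) := by
                apply mul_le_mul (e3.trans e4) e5 (by positivity) (by positivity)
        calc ∑ s ∈ Finset.Ico (M+1) (n+M+1), Tq q θ (n+M) s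
            ≤ ∑ _s ∈ Finset.Ico (M+1) (n+M+1), C^(n+M) * q^((M+1)*M/2) :=
              Finset.sum_le_sum hterm
          _ = (n:ℝ) * (C^(n+M) * q^((M+1)*M/2)) := by
              rw [Finset.sum_const, Nat.card_Ico]
              have : n + M + 1 - (M+1) = n := by omega
              rw [this, nsmul_eq_mul]
      calc (∑ s ∈ Finset.Ico (M+1) (n+M+1), Tq q θ (n+M) s) / ∏ i ∈ Finset.range (n+M), (1+θ*q^i)
          ≤ ∑ s ∈ Finset.Ico (M+1) (n+M+1), Tq q θ (n+M) s := div_le_self hIconn hD1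
        _ ≤ b M := by rw [hb]; simpa [mul_assoc] using hbound
  have hb0 : Filter.Tendsto b Filter.atTop (nhds 0) := by
    apply Summable.tendsto_atTop_zero
    apply summable_of_ratio_norm_eventually_le (r := 1/2) (by norm_num)
    have hten : Filter.Tendsto (fun M : ℕ => (C*q) * q^M) Filter.atTop (nhds 0) := by
      simpa using (tendsto_pow_atTop_nhds_zero_of_lt_one hq0.le hq1).const_mul (C*q)
    have hev : ∀ᶠ M : ℕ in Filter.atTop, (C*q) * q^M ≤ 1/2 :=
      hten.eventually (eventually_le_nhds (by norm_num))
    filter_upwards [hev] with M hM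
    have hrec : b (M+1) = b M * ((C*q) * q^M) := by
      rw [hb]
      simp only
      have he : (M+1+1)*(M+1)/2 = (M+1)*M/2 + (M+1) := by
        have := tri (M+1)
        simpa using this
      rw [he, show n + (M+1) = (n+M)+1 from by omega, pow_succ C, pow_add q, pow_succ q M]
      ring
    rw [Real.norm_eq_abs, Real.norm_eq_abs, abs_of_nonneg (hbnn _), abs_of_nonneg (hbnn _), hrec]
    have := hbnn M
    nlinarith [hM, this, mul_nonneg (mul_nonneg hC0.le (pow_pos hq0 M).le) (hbnn M)]
  have hsq : Filter.Tendsto (fun M => 1 - ∑ t ∈ Finset.range (M+1), aterm q θ n t)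
      Filter.atTop (nhds 0) :=
    squeeze_zero (fun M => (hdiff M).1) (fun M => (hdiff M).2) hb0
  have h2 : Filter.Tendsto
      (fun M : ℕ => 1 - (1 - ∑ t ∈ Finset.range (M+1), aterm q θ n t))
      Filter.atTop (nhds (1 - 0)) := tendsto_const_nhds.sub hsq
  simpa using h2

end negqbin

noncomputable def mterm (q : ℝ) (n : ℕ) {k : ℕ} (θ : Fin k → ℝ) (t : Fin k → ℕ) : ℝ :=
  qMultinomial q ((n : ℤ) + (∑ i, t i) - 1) t *
    ∏ j : Fin k,
      θ j ^ t j * q ^ (t j * (t j - 1) / 2) /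
        ∏ i ∈ Finset.range
            (n + (∑ i', t i') - ∑ i' ∈ Finset.univ.filter (fun i' => i' < j), t i'),
          (1 + θ j * q ^ i)

lemma qFacOrd_add (x : ℤ) (r s : ℕ) :
    qFacOrd q x (r+s) = qFacOrd q x r * qFacOrd q (x - r) s := by
  rw [qFacOrd, qFacOrd, qFacOrd, Finset.prod_range_add]
  congr 1
  apply Finset.prod_congr rfl
  intro i _
  congr 1
  push_cast
  ring

lemma filter_lt_zero_sum {k : ℕ} (a : ℕ) (t : Fin k → ℕ) :
    ∑ i' ∈ Finset.univ.filter (fun i' : Fin (k+1) => i' < 0), (Fin.cons a t : Fin (k+1) → ℕ) i' = 0 := by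
  rw [Finset.sum_filter]
  simp [Fin.lt_def]

lemma filter_lt_succ_sum {k : ℕ} (a : ℕ) (t : Fin k → ℕ) (j : Fin k) :
    ∑ i' ∈ Finset.univ.filter (fun i' : Fin (k+1) => i' < j.succ), (Fin.cons a t : Fin (k+1) → ℕ) i'
    = a + ∑ i' ∈ Finset.univ.filter (fun i' : Fin k => i' < j), t i' := by
  rw [Finset.sum_filter, Finset.sum_filter, Fin.sum_univ_succ]
  simp [Fin.cons_zero, Fin.cons_succ, Fin.succ_lt_succ_iff, Fin.succ_pos]

lemma mterm_cons {k : ℕ} (n : ℕ) (θ : Fin (k+1) → ℝ) (a : ℕ) (t : Fin k → ℕ) :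
    mterm q n θ (Fin.cons a t)
    = aterm q (θ 0) (n + ∑ i, t i) a * mterm q n (fun j => θ j.succ) t := by
  set s := ∑ i, t i with hs
  have hsum : ∑ i, (Fin.cons a t : Fin (k+1) → ℕ) i = a + s := Fin.sum_cons a t
  rw [mterm, mterm, aterm]
  simp only [hsum]
  -- multinomial part
  have hmul : qMultinomial q ((n : ℤ) + (↑(a + s)) - 1) (Fin.cons a t)
      = qb q (((n+s : ℕ):ℤ) + a - 1) a * qMultinomial q ((n : ℤ) + (↑s) - 1) t := by
    rw [qMultinomial, qMultinomial, qb, hsum]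
    rw [qFacOrd_add]
    have c1 : ((n : ℤ) + (↑(a + s)) - 1) = (((n+s : ℕ):ℤ) + a - 1) := by push_cast; ring
    have c2 : (((n+s : ℕ):ℤ) + a - 1 - a) = ((n : ℤ) + (↑s) - 1) := by push_cast; ring
    rw [c1, c2]
    have c3 : ∏ j, qFactorial q ((Fin.cons a t : Fin (k+1) → ℕ) j)
        = qFactorial q a * ∏ j : Fin k, qFactorial q (t j) := by
      rw [Fin.prod_univ_succ]
      simp [Fin.cons_zero, Fin.cons_succ]
    rw [c3]
    field_simp
    rfl
  rw [hmul]
  -- product part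
  have hprod : (∏ j : Fin (k+1),
        θ j ^ (Fin.cons a t : Fin (k+1) → ℕ) j
          * q ^ ((Fin.cons a t : Fin (k+1) → ℕ) j * ((Fin.cons a t : Fin (k+1) → ℕ) j - 1) / 2) /
          ∏ i ∈ Finset.range
              (n + (a + s) - ∑ i' ∈ Finset.univ.filter (fun i' => i' < j), (Fin.cons a t : Fin (k+1) → ℕ) i'),
            (1 + θ j * q ^ i))
      = (θ 0 ^ a * q ^ (a * (a - 1) / 2) / ∏ i ∈ Finset.range (n + s + a), (1 + θ 0 * q ^ i))
        * ∏ j : Fin k,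
          θ j.succ ^ t j * q ^ (t j * (t j - 1) / 2) /
            ∏ i ∈ Finset.range
                (n + s - ∑ i' ∈ Finset.univ.filter (fun i' => i' < j), t i'),
              (1 + θ j.succ * q ^ i) := by
    rw [Fin.prod_univ_succ]
    congr 1
    · rw [Fin.cons_zero, filter_lt_zero_sum]
      have harg : n + (a + s) - 0 = n + s + a := by omega
      rw [harg]
    · apply Finset.prod_congr rfl
      intro j _
      rw [Fin.cons_succ, filter_lt_succ_sum]
      have hS : ∑ i' ∈ Finset.univ.filter (fun i' : Fin k => i' < j), t i' ≤ s := by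
        rw [hs]
        exact Finset.sum_le_sum_of_subset (Finset.filter_subset _ _)
      have harg : n + (a + s) - (a + ∑ i' ∈ Finset.univ.filter (fun i' : Fin k => i' < j), t i')
          = n + s - ∑ i' ∈ Finset.univ.filter (fun i' : Fin k => i' < j), t i' := by omega
      rw [harg]
  rw [hprod]
  ring

section mainlemma
include hq0 hq1

lemma mterm_nonneg {k : ℕ} {n : ℕ} (hn : 1 ≤ n) {θ : Fin k → ℝ} (hθ : ∀ j, 0 < θ j)
    (t : Fin k → ℕ) : 0 ≤ mterm q n θ t := by
  rw [mterm]
  apply mul_nonneg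
  · rw [qMultinomial]
    apply div_nonneg
    · have hc : ((n:ℤ) + (∑ i, t i) - 1) = ((n + (∑ i, t i) - 1 : ℕ) : ℤ) := by omega
      rw [hc]
      exact qFacOrd_nat_nonneg hq0 hq1 _ _
    · exact (Finset.prod_pos fun j _ => qFactorial_pos hq0 hq1 _).le
  · apply Finset.prod_nonneg
    intro j _
    apply div_nonneg
    · have := (hθ j).le
      positivity
    · refine (Finset.prod_pos fun i _ => ?_).le
      have := hθ j
      positivity

lemma mterm_hasSum {k : ℕ} {n : ℕ} (hn : 1 ≤ n) (θ : Fin k → ℝ) (hθ : ∀ j, 0 < θ j) :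
    HasSum (mterm q n θ) 1 := by
  induction k with
  | zero =>
      have h := hasSum_fintype (mterm q n θ)
      have : ∑ t : Fin 0 → ℕ, mterm q n θ t = 1 := by
        rw [Finset.univ_unique, Finset.sum_singleton]
        simp [mterm, qMultinomial, qFacOrd, qFactorial]
      rwa [this] at h
  | succ k ih =>
      set θ' : Fin k → ℝ := fun j => θ j.succ with hθ'
      have ihs : HasSum (mterm q n θ') 1 := ih θ' (fun j => hθ j.succ)
      set F : (Fin k → ℕ) × ℕ → ℝ := fun p => mterm q n θ (Fin.cons p.2 p.1) with hF
      have hFnn : 0 ≤ F := fun p => mterm_nonneg hq0 hq1 hn hθ _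
      have hfib : ∀ t : Fin k → ℕ, HasSum (fun a => F (t, a)) (mterm q n θ' t) := by
        intro t
        have h1 : HasSum (fun a => aterm q (θ 0) (n + ∑ i, t i) a * mterm q n θ' t)
            (1 * mterm q n θ' t) :=
          (negqbin hq0 hq1 (by omega) (hθ 0)).mul_right _
        rw [one_mul] at h1
        have hfun : (fun a => F (t, a))
            = fun a => aterm q (θ 0) (n + ∑ i, t i) a * mterm q n θ' t :=
          funext fun a => mterm_cons n θ a t
        rw [hfun]
        exact h1
      have hsummable : Summable F := by
        rw [summable_prod_of_nonneg hFnn]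
        refine ⟨fun t => (hfib t).summable, ?_⟩
        have hfun : (fun t => ∑' a, F (t, a)) = fun t => mterm q n θ' t :=
          funext fun t => (hfib t).tsum_eq
        rw [hfun]
        exact ihs.summable
      have hFsum : HasSum F (∑' p, F p) := hsummable.hasSum
      have hg : HasSum (mterm q n θ') (∑' p, F p) := hFsum.prod_fiberwise hfib
      have htsum : (∑' p, F p) = 1 := hg.unique ihs
      have hF1 : HasSum F 1 := htsum ▸ hFsum
      have h2 : HasSum
          (F ∘ ((Fin.consEquiv (fun _ => ℕ)).symm.trans (Equiv.prodComm _ _))) 1 :=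
        (Equiv.hasSum_iff _).2 hF1
      have h3 : (F ∘ ((Fin.consEquiv (fun _ => ℕ)).symm.trans (Equiv.prodComm _ _)))
          = mterm q n θ := by
        funext u
        simp only [Function.comp_apply, Equiv.trans_apply, Fin.consEquiv_symm_apply,
          Equiv.prodComm_apply, Prod.swap_prod_mk]
        show mterm q n θ (Fin.cons (u 0) (Fin.tail u)) = mterm q n θ u
        rw [Fin.cons_self_tail]
      rwa [h3] at h2

end mainlemma

/-- The negative q-multinomial distribution of the first kind is a probability distribution:
    the family over (t_1,…,t_k) ∈ ℕ^k of terms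
    C_q(n+s_k−1; t) ∏_j θ_j^(t_j) q^(t_j(t_j−1)/2) / ∏_{i=1}^{n+s_k−s_{j−1}} (1 + θ_j q^(i−1))
    sums to 1. -/
theorem neg_qMultinomial_dist_first_kind (q : ℝ) (hq0 : 0 < q) (hq1 : q < 1)
    (k n : ℕ) (hk : 1 ≤ k) (hn : 1 ≤ n) (θ : Fin k → ℝ) (hθ : ∀ j, 0 < θ j) :
    HasSum
      (fun t : Fin k → ℕ =>
        qMultinomial q ((n : ℤ) + (∑ i, t i) - 1) t *
          ∏ j : Fin k,
            θ j ^ t j * q ^ (t j * (t j - 1) / 2) /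
              ∏ i ∈ Finset.range
                  (n + (∑ i', t i') - ∑ i' ∈ Finset.univ.filter (fun i' => i' < j), t i'),
                (1 + θ j * q ^ i))
      1 := by
  exact mterm_hasSum hq0 hq1 hn θ hθ
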